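/- Let P ≅ ℤⁿ act on ℝ by orientation-preserving isometries (i.e., translations) with indiscrete image in ℝ. For any finite subset W of P and any ε > 0, there exists an automorphism σ of P fixing the kernel of the action elementwise, such that for every w ∈ W and every r ∈ ℝ, |σ(w)·r − r| < ε. -/

import Mathlib

open Submodule

open Submodule

open Module

private instance intTowerAux {M : Type*} [AddCommGroup M] [inst : Module ℤ M] :
    @IsScalarTower ℤ ℤ M (@Semiring.toModule ℤ _).toSMul inst.toSMul inst.toSMul :=
  @IsScalarTower.mk ℤ ℤ M _ inst.toSMul inst.toSMul
    (fun a b m => @mul_smul ℤ M _ inst.toMulAction.toSemigroupAction a b m)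

private lemma exists_transvection {M : Type*} [AddCommGroup M] [Module ℤ M]
    (φ : M →ₗ[ℤ] ℤ) (v : M) (hφv : φ v = 0) :
    ∃ T : M ≃ₗ[ℤ] M, ∀ y, T y = y + (φ.smulRight v) y := by
  refine ⟨LinearEquiv.ofLinear (LinearMap.id + φ.smulRight v) (LinearMap.id - φ.smulRight v)
    ?_ ?_, fun y => by rw [LinearEquiv.ofLinear_apply]; rfl⟩
  · ext x
    simp only [LinearMap.coe_comp, Function.comp_apply, LinearMap.add_apply,
      LinearMap.sub_apply, LinearMap.id_apply, LinearMap.id_coe, id_eq,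
      LinearMap.smulRight_apply, map_sub, map_smul, hφv, smul_zero, sub_zero,
      smul_eq_mul, mul_zero]
    module
  · ext x
    simp only [LinearMap.coe_comp, Function.comp_apply, LinearMap.add_apply,
      LinearMap.sub_apply, LinearMap.id_apply, LinearMap.id_coe, id_eq,
      LinearMap.smulRight_apply, map_add, map_smul, hφv, smul_zero, add_zero,
      smul_eq_mul, mul_zero]
    module

private lemma basis_pass {M : Type*} [AddCommGroup M] [Module ℤ M]
    (ρ : M →ₗ[ℤ] ℝ) {ι : Type*} [Fintype ι] [DecidableEq ι]
    (b : Basis ι ℤ M) (i0 : ι) (h0 : ρ (b i0) ≠ 0) :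
    ∃ b' : Basis ι ℤ M, b' i0 = b i0 ∧
      ∀ j, j ≠ i0 → |ρ (b' j)| ≤ |ρ (b i0)| / 2 := by
  obtain ⟨φ, hφ⟩ : ∃ φ : M →ₗ[ℤ] ℤ,
      ∀ j, φ (b j) = if j = i0 then 0 else -(round (ρ (b j) / ρ (b i0))) :=
    ⟨b.constr ℤ (fun j => if j = i0 then 0 else -(round (ρ (b j) / ρ (b i0)))),
      fun j => b.constr_basis ℤ _ j⟩
  have hφ0 : φ (b i0) = 0 := by rw [hφ]; simp
  obtain ⟨T, hT⟩ := exists_transvection φ (b i0) hφ0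
  refine ⟨b.map T, ?_, ?_⟩
  · rw [Basis.map_apply, hT, LinearMap.smulRight_apply, hφ0]
    module
  · intro j hj
    rw [Basis.map_apply, hT]
    have key : ρ (b j + (φ.smulRight (b i0)) (b j))
        = ρ (b j) + (φ (b j) : ℝ) * ρ (b i0) := by simp
    rw [key, hφ j, if_neg hj]
    set x := ρ (b j)
    set r := ρ (b i0)
    have h1 : |x / r - round (x / r)| ≤ 1 / 2 := abs_sub_round _
    have h2 : x + ((-(round (x / r)) : ℤ) : ℝ) * r = (x / r - round (x / r)) * r := by
      push_cast
      rw [sub_mul, div_mul_cancel₀ x h0]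
      ring
    rw [h2, abs_mul]
    calc |x / r - ↑(round (x / r))| * |r| ≤ (1/2) * |r| :=
          mul_le_mul_of_nonneg_right h1 (abs_nonneg r)
      _ = |r| / 2 := by ring

private lemma shrink {M : Type*} [AddCommGroup M] [Module ℤ M]
    (ρ : M →ₗ[ℤ] ℝ) (hinj : ∀ x : M, ρ x = 0 → x = 0)
    {ι : Type*} [Fintype ι] [DecidableEq ι] (hcard : 2 ≤ Fintype.card ι)
    (b0 : Basis ι ℤ M) (δ : ℝ) (hδ : 0 < δ) :
    ∃ f : Basis ι ℤ M, ∀ i, |ρ (f i)| < δ := by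
  have hne : Nonempty ι := Fintype.card_pos_iff.mp (by omega)
  obtain ⟨i₀⟩ := hne
  have hnz : ∀ (b : Basis ι ℤ M) (i : ι), ρ (b i) ≠ 0 := by
    intro b i h
    exact b.ne_zero i (hinj _ h)
  have key : ∀ t : ℕ, ∃ (b : Basis ι ℤ M) (i : ι), |ρ (b i)| ≤ |ρ (b0 i₀)| / 2 ^ t := by
    intro t
    induction t with
    | zero => exact ⟨b0, i₀, by simp⟩
    | succ n ih =>
      obtain ⟨b, i, hbi⟩ := ih
      obtain ⟨b', hb'i, hb'⟩ := basis_pass ρ b i (hnz b i)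
      obtain ⟨j, hj⟩ := Fintype.exists_ne_of_one_lt_card (by omega) i
      refine ⟨b', j, ?_⟩
      calc |ρ (b' j)| ≤ |ρ (b i)| / 2 := hb' j hj
        _ ≤ (|ρ (b0 i₀)| / 2 ^ n) / 2 := by linarith
        _ = |ρ (b0 i₀)| / 2 ^ (n + 1) := by ring
  obtain ⟨t, ht⟩ : ∃ t : ℕ, |ρ (b0 i₀)| / 2 ^ t < δ := by
    obtain ⟨t, ht⟩ := pow_unbounded_of_one_lt (|ρ (b0 i₀)| / δ) (by norm_num : (1:ℝ) < 2)
    refine ⟨t, ?_⟩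
    rw [div_lt_iff₀ (by positivity)] at ht ⊢
    linarith
  obtain ⟨b, i, hbi⟩ := key t
  have hlt : |ρ (b i)| < δ := hbi.trans_lt ht
  obtain ⟨b', hb'i, hb'⟩ := basis_pass ρ b i (hnz b i)
  refine ⟨b', fun j => ?_⟩
  by_cases hji : j = i
  · rw [hji, hb'i]; exact hlt
  · have h3 := hb' j hji
    have h4 := abs_nonneg (ρ (b i))
    linarith

/-- Shortening for an indiscrete translation action of `ℤⁿ` on `ℝ`: for any finite set `W`
and ε > 0 there is an automorphism `σ` of `P` fixing the kernel of the action elementwise,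
such that every `w ∈ W` moves every point of `ℝ` by less than ε after applying `σ`. -/
theorem shorten_indiscrete_translation_action
    {P : Type*} [AddCommGroup P] [Module.Free ℤ P] [Module.Finite ℤ P]
    (ρ : P →+ ℝ)
    (hindisc : ∀ ε : ℝ, ε > 0 → ∃ p : P, ρ p ≠ 0 ∧ |ρ p| < ε)
    (W : Finset P) (ε : ℝ) (hε : ε > 0) :
    ∃ σ : P ≃+ P, (∀ p : P, ρ p = 0 → σ p = p) ∧
      ∀ w ∈ W, ∀ r : ℝ, |(r + ρ (σ w)) - r| < ε := by
  classical
  set ρ' : P →ₗ[ℤ] ℝ := ρ.toIntLinearMap with hρ'def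
  have hρ'app : ∀ p, ρ' p = ρ p := fun p => rfl
  set K : Submodule ℤ P := LinearMap.ker ρ' with hKdef
  -- the quotient is torsion-free, hence free, hence the quotient map splits
  haveI : NoZeroSMulDivisors ℤ (P ⧸ K) := by
    constructor
    intro c x h
    obtain ⟨y, rfl⟩ := Submodule.Quotient.mk_surjective K x
    rw [← Submodule.Quotient.mk_smul, Submodule.Quotient.mk_eq_zero] at h
    have h2 : ρ' (c • y) = 0 := h
    rw [map_smul, smul_eq_zero] at h2
    rcases h2 with h2 | h2
    · exact Or.inl h2
    · exact Or.inr (by rwa [Submodule.Quotient.mk_eq_zero])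
  haveI : Module.Finite ℤ (P ⧸ K) := Module.Finite.quotient ℤ K
  obtain ⟨s, hs⟩ : ∃ s : (P ⧸ K) →ₗ[ℤ] P, K.mkQ ∘ₗ s = LinearMap.id :=
    K.mkQ.exists_rightInverse_of_surjective (Submodule.range_mkQ K)
  have hs' : ∀ q, K.mkQ (s q) = q := fun q => DFunLike.congr_fun hs q
  set Q : Submodule ℤ P := LinearMap.range s with hQdef
  have hKQ : IsCompl K Q := by
    constructor
    · rw [disjoint_iff_inf_le]
      rintro x ⟨hxK, q, rfl⟩
      have : K.mkQ (s q) = 0 := (Submodule.Quotient.mk_eq_zero K).mpr hxK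
      rw [hs'] at this
      rw [this, map_zero]
      exact zero_mem ⊥
    · rw [codisjoint_iff, eq_top_iff]
      intro x _
      have h1 : x - s (K.mkQ x) ∈ K := by
        rw [← Submodule.Quotient.mk_eq_zero K]
        show K.mkQ _ = 0
        rw [map_sub, hs', sub_self]
      have h2 : s (K.mkQ x) ∈ Q := ⟨K.mkQ x, rfl⟩
      have := Submodule.add_mem_sup h1 h2
      rwa [sub_add_cancel] at this
  -- basis of the complement Q
  obtain ⟨n, bQ⟩ := Submodule.basisOfPid (Module.Free.chooseBasis ℤ P) Q
  set ρQ : Q →ₗ[ℤ] ℝ := ρ'.comp Q.subtype with hρQdef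
  have hinjQ : ∀ x : Q, ρQ x = 0 → x = 0 := by
    intro x hx
    have hxK : (x : P) ∈ K := hx
    have := hKQ.disjoint
    rw [disjoint_iff_inf_le] at this
    have h0 : (x : P) ∈ (⊥ : Submodule ℤ P) := this ⟨hxK, x.2⟩
    exact Subtype.ext (by simpa using h0)
  set e := Submodule.prodEquivOfIsCompl K Q hKQ with hedef
  have hdecomp : ∀ x : P, ρ' x = ρQ ((e.symm x).2) := by
    intro x
    conv_lhs => rw [← e.apply_symm_apply x]
    rw [Submodule.coe_prodEquivOfIsCompl', map_add]
    have h1 : ρ' (((e.symm x).1 : K) : P) = 0 := (e.symm x).1.2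
    rw [h1, zero_add]
    rfl
  -- the rank of Q is at least 2, by indiscreteness
  have hcard : 2 ≤ n := by
    by_contra hlt
    push_neg at hlt
    interval_cases n
    · obtain ⟨p, hp1, hp2⟩ := hindisc 1 one_pos
      apply hp1
      rw [← hρ'app, hdecomp]
      have hz : (e.symm p).2 = 0 := by
        have h := bQ.sum_repr (e.symm p).2
        simpa using h.symm
      rw [hz, map_zero]
    · have hq1 : ρQ (bQ 0) ≠ 0 := fun h => bQ.ne_zero 0 (hinjQ _ h)
      obtain ⟨p, hp1, hp2⟩ := hindisc |ρQ (bQ 0)| (abs_pos.mpr hq1)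
      set q : Q := (e.symm p).2 with hqdef
      have hρp : ρ p = ρQ q := hdecomp p
      have hrepr : ρQ q = (bQ.repr q 0 : ℝ) * ρQ (bQ 0) := by
        conv_lhs => rw [← bQ.sum_repr q]
        simp
      have hc0 : bQ.repr q 0 ≠ 0 := by
        intro h
        apply hp1
        rw [hρp, hrepr, h]
        simp
      have h1le : (1 : ℝ) ≤ |(bQ.repr q 0 : ℝ)| := by
        rw [← Int.cast_abs]
        exact_mod_cast Int.one_le_abs hc0
      rw [hρp, hrepr, abs_mul] at hp2
      nlinarith [abs_nonneg (ρQ (bQ 0)), abs_pos.mpr hq1]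
  -- choose δ and shrink the basis
  set Sfun : P → ℝ := fun w => ∑ i, ((|bQ.repr ((e.symm w).2) i| : ℤ) : ℝ) with hSdef
  have hS0 : ∀ w, 0 ≤ Sfun w := by
    intro w
    refine Finset.sum_nonneg fun i _ => by positivity
  set B : ℝ := ∑ w ∈ W, Sfun w with hBdef
  have hB0 : 0 ≤ B := Finset.sum_nonneg fun w _ => hS0 w
  have hSB : ∀ w ∈ W, Sfun w ≤ B := fun w hw =>
    Finset.single_le_sum (fun x _ => hS0 x) hw
  set δ : ℝ := ε / (B + 1) with hδdef
  have hδ : 0 < δ := div_pos hε (by linarith)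
  obtain ⟨f, hf⟩ := shrink ρQ hinjQ (by rw [Fintype.card_fin]; exact hcard) bQ δ hδ
  set τ : Q ≃ₗ[ℤ] Q := bQ.equiv f (Equiv.refl _) with hτdef
  have hτbound : ∀ q : Q, |ρQ (τ q)| ≤ (∑ i, ((|bQ.repr q i| : ℤ) : ℝ)) * δ := by
    intro q
    have hq : ρQ (τ q) = ∑ i, (bQ.repr q i : ℝ) * ρQ (f i) := by
      conv_lhs => rw [← bQ.sum_repr q]
      rw [map_sum, map_sum]
      have hτb : ∀ i, τ (bQ i) = f i := fun i => by
        rw [hτdef]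
        simp [Basis.equiv_apply]
      refine Finset.sum_congr rfl fun i _ => ?_
      rw [map_smul, hτb]
      simp
    rw [hq]
    refine (Finset.abs_sum_le_sum_abs _ _).trans ?_
    rw [Finset.sum_mul]
    refine Finset.sum_le_sum fun i _ => ?_
    rw [abs_mul]
    have h2 : |(bQ.repr q i : ℝ)| = ((|bQ.repr q i| : ℤ) : ℝ) := by
      rw [Int.cast_abs]
    rw [h2]
    exact mul_le_mul_of_nonneg_left (hf i).le (by positivity)
  set σL : P ≃ₗ[ℤ] P := (e.symm.trans ((LinearEquiv.refl ℤ K).prodCongr τ)).trans e with hσdef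
  have hσapp : ∀ x : P, σL x = e ((e.symm x).1, τ ((e.symm x).2)) := by
    intro x
    rfl
  refine ⟨σL.toAddEquiv, ?_, ?_⟩
  · intro p hp
    have hpK : p ∈ K := LinearMap.mem_ker.mpr ((hρ'app p).trans hp)
    show σL p = p
    rw [hσapp]
    have h1 : e.symm p = ((⟨p, hpK⟩ : K), 0) :=
      Submodule.prodEquivOfIsCompl_symm_apply_left K Q hKQ (⟨p, hpK⟩ : K)
    rw [h1]
    simp only [map_zero]
    rw [Submodule.coe_prodEquivOfIsCompl']
    simp
  · intro w hw r
    have harith : (r + ρ (σL.toAddEquiv w)) - r = ρ (σL w) := by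
      rw [show σL.toAddEquiv w = σL w from rfl]
      ring
    rw [harith]
    have hval : ρ (σL w) = ρQ (τ ((e.symm w).2)) := by
      rw [← hρ'app, hdecomp (σL w)]
      congr 1
      rw [hσapp]
      rw [e.symm_apply_apply]
    rw [hval]
    calc |ρQ (τ ((e.symm w).2))| ≤ Sfun w * δ := hτbound _
      _ ≤ B * δ := mul_le_mul_of_nonneg_right (hSB w hw) hδ.le
      _ < (B + 1) * δ := mul_lt_mul_of_pos_right (lt_add_one B) hδ
      _ = ε := by
          rw [hδdef, mul_div_cancel₀ _ (by linarith : B + 1 ≠ 0)]
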